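/- Linear program for the optimal expected waiting time for two elementary links: in the two-elementary-link MDP, the infimum, over decision functions d on the transient states under which absorption into the states {1}×{−1,…,m₁*}×{−1,…,m₂*} occurs with probability one, of the expected time to absorption starting from the initial distribution |0⟩⊗|g_{p₁}⟩⊗|g_{p₂}⟩ — i.e., of ⟨γ|(I − Q^d)^{−1}|g_{p₁}⟩⊗|g_{p₂}⟩ where Q^d := ∑_{a∈A} T^a_{0→0} D_a (D_a the diagonal matrix of probabilities d(0,m₁,m₂)(a)) and |γ⟩ is the all-ones vector — equals the optimal value of the linear program: minimize ⟨γ|x⟩ over vectors x, w_a (a ∈ A) of dimension (m₁*+2)(m₂*+2), subject to the componentwise constraints 0 ≤ w_a ≤ x for all a ∈ A, x − ∑_{a∈A} T^a_{0→0} w_a = |g_{p₁}⟩⊗|g_{p₂}⟩, and ∑_{a∈A} w_a = x. Moreover, every feasible point defines a stationary policy via d(0,m₁,m₂)(a) = ⟨0,m₁,m₂|w_a⟩/⟨0,m₁,m₂|x⟩ whenever the denominator is nonzero. -/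

import Mathlib

open BigOperators Filter Matrix

noncomputable section

/-- The five actions of the two-elementary-link MDP: keep/regenerate each link,
or perform entanglement swapping (`swap` = `⋈`). -/
inductive Act | a00 | a01 | a10 | a11 | swap
deriving DecidableEq

instance instFintypeAct : Fintype Act where
  elems := {.a00, .a01, .a10, .a11, .swap}
  complete := fun x => by cases x <;> simp

/-- Single-link "wait" transition matrix `T_j⁰` on the state space
`{-1, 0, …, m_j*}`, encoded as `Fin (m_j* + 2)` with index `0 ↦ -1` and
index `k+1 ↦` memory time `k`. -/
def Tw (ms : ℕ) : Matrix (Fin (ms + 2)) (Fin (ms + 2)) ℝ :=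
  Matrix.of fun s' s =>
    if (s : ℕ) = 0 then (if (s' : ℕ) = 0 then 1 else 0)
    else if (s : ℕ) = ms + 1 then (if (s' : ℕ) = 0 then 1 else 0)
    else if (s' : ℕ) = (s : ℕ) + 1 then 1 else 0

/-- Single-link "request" transition matrix `T_j¹`. -/
def Tr (ms : ℕ) (p : ℝ) : Matrix (Fin (ms + 2)) (Fin (ms + 2)) ℝ :=
  Matrix.of fun s' _ => if (s' : ℕ) = 0 then 1 - p else if (s' : ℕ) = 1 then p else 0

/-- The vector `|g_p⟩ = (1-p)|-1⟩ + p|0⟩`. -/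
def gvec (ms : ℕ) (p : ℝ) : Fin (ms + 2) → ℝ :=
  fun s => if (s : ℕ) = 0 then 1 - p else if (s : ℕ) = 1 then p else 0

/-- The vector `|γ_j⁺⟩ = ∑_{m=0}^{m_j*} |m⟩`. -/
def gammaPlus (ms : ℕ) : Fin (ms + 2) → ℝ := fun s => if (s : ℕ) = 0 then 0 else 1

/-- The projector `𝟙_j⁺ = ∑_{m=0}^{m_j*} |m⟩⟨m|`. -/
def idPlus (ms : ℕ) : Matrix (Fin (ms + 2)) (Fin (ms + 2)) ℝ :=
  Matrix.of fun s' s => if s' = s ∧ (s : ℕ) ≠ 0 then 1 else 0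

/-- The shift `S_j = ∑_{m=0}^{m_j*-1} |m+1⟩⟨m|`. -/
def shiftS (ms : ℕ) : Matrix (Fin (ms + 2)) (Fin (ms + 2)) ℝ :=
  Matrix.of fun s' s =>
    if (s' : ℕ) = (s : ℕ) + 1 ∧ 1 ≤ (s : ℕ) ∧ (s : ℕ) ≤ ms then 1 else 0

/-- The pair-of-memory-times state space. -/
abbrev TwoV (m1 m2 : ℕ) := Fin (m1 + 2) × Fin (m2 + 2)

/-- The transient-to-transient blocks `T^a_{0→0}` of the five transition matrices. -/
def Tzz (m1 m2 : ℕ) (p1 p2 q : ℝ) : Act → Matrix (TwoV m1 m2) (TwoV m1 m2) ℝ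
  | .a00 => Matrix.of fun v' v => Tw m1 v'.1 v.1 * Tw m2 v'.2 v.2
  | .a01 => Matrix.of fun v' v => Tw m1 v'.1 v.1 * Tr m2 p2 v'.2 v.2
  | .a10 => Matrix.of fun v' v => Tr m1 p1 v'.1 v.1 * Tw m2 v'.2 v.2
  | .a11 => Matrix.of fun v' v => Tr m1 p1 v'.1 v.1 * Tr m2 p2 v'.2 v.2
  | .swap => Matrix.of fun v' v =>
      (1 - q) * (gvec m1 p1 v'.1 * gvec m2 p2 v'.2) * (gammaPlus m1 v.1 * gammaPlus m2 v.2)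
      + shiftS m1 v'.1 v.1 * (if (v'.2 : ℕ) = 0 ∧ (v.2 : ℕ) = 0 then 1 else 0)
      + (if (v'.1 : ℕ) = 0 ∧ (v.1 : ℕ) = 0 then 1 else 0) * shiftS m2 v'.2 v.2
      + (if (v'.1 : ℕ) = 0 ∧ (v'.2 : ℕ) = 0 ∧ (v.1 : ℕ) = 0 ∧ (v.2 : ℕ) = 0 then 1 else 0)
      + (if (v'.1 : ℕ) = 0 ∧ (v'.2 : ℕ) = 0 ∧ (v.1 : ℕ) = 0 ∧ (v.2 : ℕ) = m2 + 1 then 1 else 0)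
      + (if (v'.1 : ℕ) = 0 ∧ (v'.2 : ℕ) = 0 ∧ (v.1 : ℕ) = m1 + 1 ∧ (v.2 : ℕ) = 0 then 1 else 0)

/-- The transient-to-absorbing blocks `T^a_{0→1}`: zero except for the swap action,
where it is `q 𝟙₁⁺ ⊗ 𝟙₂⁺`. -/
def Tzo (m1 m2 : ℕ) (q : ℝ) : Act → Matrix (TwoV m1 m2) (TwoV m1 m2) ℝ
  | .swap => Matrix.of fun v' v => q * idPlus m1 v'.1 v.1 * idPlus m2 v'.2 v.2
  | _ => 0

/-- `d` is a valid decision function on the transient states. -/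
def ValidDec {m1 m2 : ℕ} (d : TwoV m1 m2 → Act → ℝ) : Prop :=
  (∀ v a, 0 ≤ d v a) ∧ ∀ v, ∑ a : Act, d v a = 1

/-- The transient block `Q^d` of the induced chain. -/
def Qmat (m1 m2 : ℕ) (p1 p2 q : ℝ) (d : TwoV m1 m2 → Act → ℝ) :
    Matrix (TwoV m1 m2) (TwoV m1 m2) ℝ :=
  Matrix.of fun v' v => ∑ a : Act, Tzz m1 m2 p1 p2 q a v' v * d v a

/-- The transient-to-absorbing block `R^d` of the induced chain. -/
def Rmat (m1 m2 : ℕ) (q : ℝ) (d : TwoV m1 m2 → Act → ℝ) :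
    Matrix (TwoV m1 m2) (TwoV m1 m2) ℝ :=
  Matrix.of fun v' v => ∑ a : Act, Tzo m1 m2 q a v' v * d v a

/-- The initial distribution `|g_{p₁}⟩ ⊗ |g_{p₂}⟩` on the transient block. -/
def ginit (m1 m2 : ℕ) (p1 p2 : ℝ) : TwoV m1 m2 → ℝ :=
  fun v => gvec m1 p1 v.1 * gvec m2 p2 v.2

/-- Feasibility for the linear program of Theorem 6 (optimal expected waiting time for
two elementary links). -/
def Feas11 (m1 m2 : ℕ) (p1 p2 q : ℝ) (x : TwoV m1 m2 → ℝ)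
    (w : Act → TwoV m1 m2 → ℝ) : Prop :=
  (∀ a s, 0 ≤ w a s ∧ w a s ≤ x s) ∧
  (∀ s', x s' - ∑ a : Act, (Tzz m1 m2 p1 p2 q a).mulVec (w a) s' = ginit m1 m2 p1 p2 s') ∧
  (∀ s, ∑ a : Act, w a s = x s)

section Aux

lemma sum_ite_coe (ms c : ℕ) (hc : c < ms + 2) :
    ∑ s' : Fin (ms + 2), (if (s' : ℕ) = c then (1:ℝ) else 0) = 1 := by
  have : ∀ s' : Fin (ms + 2), ((s' : ℕ) = c) = (s' = ⟨c, hc⟩) := by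
    intro s'; simp [Fin.ext_iff]
  simp_rw [this]; simp

lemma Tw_nonneg (ms : ℕ) (s' s : Fin (ms + 2)) : 0 ≤ Tw ms s' s := by
  unfold Tw; dsimp only [Matrix.of_apply]; split_ifs <;> norm_num

lemma Tw_colsum (ms : ℕ) (s : Fin (ms + 2)) : ∑ s' : Fin (ms + 2), Tw ms s' s = 1 := by
  unfold Tw; dsimp only [Matrix.of_apply]
  by_cases h0 : (s : ℕ) = 0
  · simp only [h0, if_true]; exact sum_ite_coe ms 0 (by omega)
  · by_cases hm : (s : ℕ) = ms + 1
    · simp only [h0, hm, if_false, if_true]; exact sum_ite_coe ms 0 (by omega)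
    · simp only [h0, hm, if_false]
      exact sum_ite_coe ms ((s:ℕ)+1) (by have := s.isLt; omega)

lemma Tr_nonneg (ms : ℕ) {p : ℝ} (hp0 : 0 ≤ p) (hp1 : p ≤ 1) (s' s : Fin (ms + 2)) :
    0 ≤ Tr ms p s' s := by
  unfold Tr; dsimp only [Matrix.of_apply]; split_ifs <;> linarith

lemma Tr_colsum (ms : ℕ) (p : ℝ) (s : Fin (ms + 2)) :
    ∑ s' : Fin (ms + 2), Tr ms p s' s = 1 := by
  unfold Tr; dsimp only [Matrix.of_apply]
  rw [Finset.sum_eq_add_of_mem (⟨0, by omega⟩ : Fin (ms+2)) (⟨1, by omega⟩ : Fin (ms+2))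
    (Finset.mem_univ _) (Finset.mem_univ _) (by simp [Fin.ext_iff])]
  · norm_num
  · intro c _ hc
    rcases hc with ⟨hc0, hc1⟩
    rw [if_neg, if_neg]
    · simpa [Fin.ext_iff] using hc1
    · exact fun h => hc0 (Fin.ext h)

lemma gvec_nonneg (ms : ℕ) {p : ℝ} (hp0 : 0 ≤ p) (hp1 : p ≤ 1) (s : Fin (ms + 2)) :
    0 ≤ gvec ms p s := by
  unfold gvec; split_ifs <;> linarith

lemma gvec_sum (ms : ℕ) (p : ℝ) : ∑ s : Fin (ms + 2), gvec ms p s = 1 := by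
  unfold gvec
  rw [Finset.sum_eq_add_of_mem (⟨0, by omega⟩ : Fin (ms+2)) (⟨1, by omega⟩ : Fin (ms+2))
    (Finset.mem_univ _) (Finset.mem_univ _) (by simp [Fin.ext_iff])]
  · norm_num
  · intro c _ hc
    rcases hc with ⟨hc0, hc1⟩
    rw [if_neg, if_neg]
    · simpa [Fin.ext_iff] using hc1
    · exact fun h => hc0 (Fin.ext h)

lemma gammaPlus_nonneg (ms : ℕ) (s : Fin (ms + 2)) : 0 ≤ gammaPlus ms s := by
  unfold gammaPlus; split_ifs <;> norm_num

lemma gammaPlus_le_one (ms : ℕ) (s : Fin (ms + 2)) : gammaPlus ms s ≤ 1 := by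
  unfold gammaPlus; split_ifs <;> norm_num

lemma idPlus_nonneg (ms : ℕ) (s' s : Fin (ms + 2)) : 0 ≤ idPlus ms s' s := by
  unfold idPlus; dsimp only [Matrix.of_apply]; split_ifs <;> norm_num

lemma idPlus_colsum (ms : ℕ) (s : Fin (ms + 2)) :
    ∑ s' : Fin (ms + 2), idPlus ms s' s = if (s : ℕ) = 0 then 0 else 1 := by
  unfold idPlus; dsimp only [Matrix.of_apply]
  by_cases h0 : (s : ℕ) = 0
  · simp [h0]
  · simp only [h0, if_false]
    rw [show (1:ℝ) = ∑ s' : Fin (ms+2), if s' = s then 1 else 0 by simp]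
    apply Finset.sum_congr rfl
    intro c _; by_cases h : c = s <;> simp [h, h0]

lemma shiftS_nonneg (ms : ℕ) (s' s : Fin (ms + 2)) : 0 ≤ shiftS ms s' s := by
  unfold shiftS; dsimp only [Matrix.of_apply]; split_ifs <;> norm_num

lemma shiftS_colsum (ms : ℕ) (s : Fin (ms + 2)) :
    ∑ s' : Fin (ms + 2), shiftS ms s' s
      = if 1 ≤ (s : ℕ) ∧ (s : ℕ) ≤ ms then 1 else 0 := by
  unfold shiftS; dsimp only [Matrix.of_apply]
  by_cases h : 1 ≤ (s : ℕ) ∧ (s : ℕ) ≤ ms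
  · simp only [h, and_true, if_true]
    exact sum_ite_coe ms ((s:ℕ)+1) (by omega)
  · simp [h]

end Aux
section Aux2

lemma prodsum {n1 n2 : ℕ} (f : Fin n1 → ℝ) (g : Fin n2 → ℝ) :
    ∑ v : Fin n1 × Fin n2, f v.1 * g v.2 = (∑ s, f s) * (∑ s, g s) := by
  rw [Fintype.sum_prod_type, Finset.sum_mul]
  exact Finset.sum_congr rfl fun s1 _ => by rw [Finset.mul_sum]

lemma ind_and (P Q : Prop) [Decidable P] [Decidable Q] :
    (if P ∧ Q then (1:ℝ) else 0) = (if P then (1:ℝ) else 0) * (if Q then 1 else 0) := by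
  split_ifs <;> simp_all

lemma Tzz_swap_colsum (m1 m2 : ℕ) (p1 p2 q : ℝ) (v : TwoV m1 m2) :
    ∑ v' : TwoV m1 m2, Tzz m1 m2 p1 p2 q .swap v' v =
      (1-q) * (gammaPlus m1 v.1 * gammaPlus m2 v.2)
      + (if 1 ≤ (v.1:ℕ) ∧ (v.1:ℕ) ≤ m1 then 1 else 0) * (if (v.2:ℕ) = 0 then 1 else 0)
      + (if (v.1:ℕ) = 0 then 1 else 0) * (if 1 ≤ (v.2:ℕ) ∧ (v.2:ℕ) ≤ m2 then 1 else 0)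
      + (if (v.1:ℕ) = 0 ∧ (v.2:ℕ) = 0 then 1 else 0)
      + (if (v.1:ℕ) = 0 ∧ (v.2:ℕ) = m2+1 then 1 else 0)
      + (if (v.1:ℕ) = m1+1 ∧ (v.2:ℕ) = 0 then 1 else 0) := by
  have expand : ∀ v' : TwoV m1 m2, Tzz m1 m2 p1 p2 q .swap v' v =
      ((1-q) * (gammaPlus m1 v.1 * gammaPlus m2 v.2)) * (gvec m1 p1 v'.1 * gvec m2 p2 v'.2)
      + (if (v.2:ℕ) = 0 then (1:ℝ) else 0) * (shiftS m1 v'.1 v.1 * (if (v'.2:ℕ) = 0 then 1 else 0))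
      + (if (v.1:ℕ) = 0 then (1:ℝ) else 0) * ((if (v'.1:ℕ) = 0 then (1:ℝ) else 0) * shiftS m2 v'.2 v.2)
      + (if (v.1:ℕ) = 0 ∧ (v.2:ℕ) = 0 then (1:ℝ) else 0) * ((if (v'.1:ℕ)=0 then (1:ℝ) else 0)*(if (v'.2:ℕ)=0 then 1 else 0))
      + (if (v.1:ℕ) = 0 ∧ (v.2:ℕ) = m2+1 then (1:ℝ) else 0) * ((if (v'.1:ℕ)=0 then (1:ℝ) else 0)*(if (v'.2:ℕ)=0 then 1 else 0))
      + (if (v.1:ℕ) = m1+1 ∧ (v.2:ℕ) = 0 then (1:ℝ) else 0) * ((if (v'.1:ℕ)=0 then (1:ℝ) else 0)*(if (v'.2:ℕ)=0 then 1 else 0)) := by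
    intro v'
    show ((1 - q) * (gvec m1 p1 v'.1 * gvec m2 p2 v'.2) * (gammaPlus m1 v.1 * gammaPlus m2 v.2)
      + shiftS m1 v'.1 v.1 * (if (v'.2 : ℕ) = 0 ∧ (v.2 : ℕ) = 0 then 1 else 0)
      + (if (v'.1 : ℕ) = 0 ∧ (v.1 : ℕ) = 0 then 1 else 0) * shiftS m2 v'.2 v.2
      + (if (v'.1 : ℕ) = 0 ∧ (v'.2 : ℕ) = 0 ∧ (v.1 : ℕ) = 0 ∧ (v.2 : ℕ) = 0 then 1 else 0)
      + (if (v'.1 : ℕ) = 0 ∧ (v'.2 : ℕ) = 0 ∧ (v.1 : ℕ) = 0 ∧ (v.2 : ℕ) = m2 + 1 then 1 else 0)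
      + (if (v'.1 : ℕ) = 0 ∧ (v'.2 : ℕ) = 0 ∧ (v.1 : ℕ) = m1 + 1 ∧ (v.2 : ℕ) = 0 then 1 else 0)) = _
    simp only [ind_and]
    ring
  rw [Finset.sum_congr rfl fun v' _ => expand v']
  simp only [Finset.sum_add_distrib, ← Finset.mul_sum]
  have S1 : ∑ v' : TwoV m1 m2, gvec m1 p1 v'.1 * gvec m2 p2 v'.2 = 1 := by
    rw [prodsum (gvec m1 p1) (gvec m2 p2), gvec_sum, gvec_sum]; norm_num
  have S2 : ∑ v' : TwoV m1 m2, shiftS m1 v'.1 v.1 * (if (v'.2:ℕ)=0 then (1:ℝ) else 0)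
      = if 1 ≤ (v.1:ℕ) ∧ (v.1:ℕ) ≤ m1 then 1 else 0 := by
    rw [prodsum (fun s => shiftS m1 s v.1) (fun s => if (s:ℕ)=0 then (1:ℝ) else 0),
      shiftS_colsum, sum_ite_coe m2 0 (by omega), mul_one]
  have S3 : ∑ v' : TwoV m1 m2, (if (v'.1:ℕ)=0 then (1:ℝ) else 0) * shiftS m2 v'.2 v.2
      = if 1 ≤ (v.2:ℕ) ∧ (v.2:ℕ) ≤ m2 then 1 else 0 := by
    rw [prodsum (fun s => if (s:ℕ)=0 then (1:ℝ) else 0) (fun s => shiftS m2 s v.2),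
      shiftS_colsum, sum_ite_coe m1 0 (by omega), one_mul]
  have S4 : ∑ v' : TwoV m1 m2, (if (v'.1:ℕ)=0 then (1:ℝ) else 0) * (if (v'.2:ℕ)=0 then (1:ℝ) else 0) = 1 := by
    rw [prodsum (fun s => if (s:ℕ)=0 then (1:ℝ) else 0) (fun s => if (s:ℕ)=0 then (1:ℝ) else 0),
      sum_ite_coe m1 0 (by omega), sum_ite_coe m2 0 (by omega)]; norm_num
  rw [S1, S2, S3, S4]
  ring
end Aux2
section Aux3

variable {m1 m2 : ℕ} {p1 p2 q : ℝ}

lemma prodsum' {n1 n2 : ℕ} (F : Fin n1 × Fin n2 → ℝ) (f : Fin n1 → ℝ) (g : Fin n2 → ℝ)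
    (hF : ∀ v, F v = f v.1 * g v.2) :
    ∑ v : Fin n1 × Fin n2, F v = (∑ s, f s) * (∑ s, g s) :=
  (Finset.sum_congr rfl fun v _ => hF v).trans (prodsum f g)

lemma Tzz_colsum (m1 m2 : ℕ) (p1 p2 q : ℝ) (a : Act) (v : TwoV m1 m2) :
    ∑ v' : TwoV m1 m2, Tzz m1 m2 p1 p2 q a v' v
      = 1 - (if a = Act.swap ∧ 1 ≤ (v.1:ℕ) ∧ 1 ≤ (v.2:ℕ) then q else 0) := by
  have hb1 := v.1.isLt
  have hb2 := v.2.isLt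
  cases a with
  | a00 =>
      refine (prodsum' _ (fun s => Tw m1 s v.1) (fun s => Tw m2 s v.2) (fun v' => rfl)).trans ?_
      rw [Tw_colsum, Tw_colsum]; simp
  | a01 =>
      refine (prodsum' _ (fun s => Tw m1 s v.1) (fun s => Tr m2 p2 s v.2) (fun v' => rfl)).trans ?_
      rw [Tw_colsum, Tr_colsum]; simp
  | a10 =>
      refine (prodsum' _ (fun s => Tr m1 p1 s v.1) (fun s => Tw m2 s v.2) (fun v' => rfl)).trans ?_
      rw [Tr_colsum, Tw_colsum]; simp
  | a11 =>
      refine (prodsum' _ (fun s => Tr m1 p1 s v.1) (fun s => Tr m2 p2 s v.2) (fun v' => rfl)).trans ?_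
      rw [Tr_colsum, Tr_colsum]; simp
  | swap =>
      rw [Tzz_swap_colsum]
      by_cases h1 : (v.1:ℕ) = 0 <;> by_cases h2 : (v.2:ℕ) = 0 <;>
        simp [gammaPlus, h1, h2] <;> (try split_ifs) <;>
        first | rfl | ring1 | (exfalso; omega)

lemma Tzo_colsum (m1 m2 : ℕ) (q : ℝ) (a : Act) (v : TwoV m1 m2) :
    ∑ v' : TwoV m1 m2, Tzo m1 m2 q a v' v
      = if a = Act.swap ∧ 1 ≤ (v.1:ℕ) ∧ 1 ≤ (v.2:ℕ) then q else 0 := by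
  cases a with
  | swap =>
      refine (prodsum' _ (fun s => q * idPlus m1 s v.1) (fun s => idPlus m2 s v.2)
        (fun v' => by show q * idPlus m1 v'.1 v.1 * idPlus m2 v'.2 v.2 = _; ring)).trans ?_
      rw [show (∑ s, q * idPlus m1 s v.1) = q * ∑ s, idPlus m1 s v.1 from (Finset.mul_sum _ _ _).symm,
        idPlus_colsum, idPlus_colsum]
      by_cases h1 : (v.1:ℕ) = 0 <;> by_cases h2 : (v.2:ℕ) = 0 <;>
        simp [h1, h2] <;> (try split_ifs) <;>
        first | rfl | ring1 | (exfalso; omega)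
  | a00 => simp [Tzo]
  | a01 => simp [Tzo]
  | a10 => simp [Tzo]
  | a11 => simp [Tzo]

lemma Tzz_nonneg (hp1 : 0 ≤ p1 ∧ p1 ≤ 1) (hp2 : 0 ≤ p2 ∧ p2 ≤ 1) (hq : 0 ≤ q ∧ q ≤ 1)
    (a : Act) (v' v : TwoV m1 m2) : 0 ≤ Tzz m1 m2 p1 p2 q a v' v := by
  have i1 := Tw_nonneg m1 v'.1 v.1
  have i2 := Tw_nonneg m2 v'.2 v.2
  have i3 := Tr_nonneg m1 hp1.1 hp1.2 v'.1 v.1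
  have i4 := Tr_nonneg m2 hp2.1 hp2.2 v'.2 v.2
  cases a with
  | a00 => exact mul_nonneg i1 i2
  | a01 => exact mul_nonneg i1 i4
  | a10 => exact mul_nonneg i3 i2
  | a11 => exact mul_nonneg i3 i4
  | swap =>
      show (0:ℝ) ≤ (1 - q) * (gvec m1 p1 v'.1 * gvec m2 p2 v'.2) * (gammaPlus m1 v.1 * gammaPlus m2 v.2)
        + shiftS m1 v'.1 v.1 * (if (v'.2 : ℕ) = 0 ∧ (v.2 : ℕ) = 0 then 1 else 0)
        + (if (v'.1 : ℕ) = 0 ∧ (v.1 : ℕ) = 0 then 1 else 0) * shiftS m2 v'.2 v.2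
        + (if (v'.1 : ℕ) = 0 ∧ (v'.2 : ℕ) = 0 ∧ (v.1 : ℕ) = 0 ∧ (v.2 : ℕ) = 0 then 1 else 0)
        + (if (v'.1 : ℕ) = 0 ∧ (v'.2 : ℕ) = 0 ∧ (v.1 : ℕ) = 0 ∧ (v.2 : ℕ) = m2 + 1 then 1 else 0)
        + (if (v'.1 : ℕ) = 0 ∧ (v'.2 : ℕ) = 0 ∧ (v.1 : ℕ) = m1 + 1 ∧ (v.2 : ℕ) = 0 then 1 else 0)
      have g1 := gvec_nonneg m1 hp1.1 hp1.2 v'.1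
      have g2 := gvec_nonneg m2 hp2.1 hp2.2 v'.2
      have ga1 := gammaPlus_nonneg m1 v.1
      have ga2 := gammaPlus_nonneg m2 v.2
      have s1 := shiftS_nonneg m1 v'.1 v.1
      have s2 := shiftS_nonneg m2 v'.2 v.2
      have hq' : (0:ℝ) ≤ 1 - q := by linarith [hq.2]
      apply add_nonneg; apply add_nonneg; apply add_nonneg; apply add_nonneg; apply add_nonneg
      · exact mul_nonneg (mul_nonneg hq' (mul_nonneg g1 g2)) (mul_nonneg ga1 ga2)
      · exact mul_nonneg s1 (by split_ifs <;> norm_num)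
      · exact mul_nonneg (by split_ifs <;> norm_num) s2
      · split_ifs <;> norm_num
      · split_ifs <;> norm_num
      · split_ifs <;> norm_num

lemma Qmat_nonneg (hp1 : 0 ≤ p1 ∧ p1 ≤ 1) (hp2 : 0 ≤ p2 ∧ p2 ≤ 1) (hq : 0 ≤ q ∧ q ≤ 1)
    {d : TwoV m1 m2 → Act → ℝ} (hd : ∀ v a, 0 ≤ d v a) (v' v : TwoV m1 m2) :
    0 ≤ Qmat m1 m2 p1 p2 q d v' v := by
  show 0 ≤ ∑ a : Act, Tzz m1 m2 p1 p2 q a v' v * d v a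
  exact Finset.sum_nonneg fun a _ => mul_nonneg (Tzz_nonneg hp1 hp2 hq a v' v) (hd v a)

lemma Qmat_colsum {d : TwoV m1 m2 → Act → ℝ} (hd : ValidDec d) (v : TwoV m1 m2) :
    ∑ v' : TwoV m1 m2, Qmat m1 m2 p1 p2 q d v' v
      = 1 - (if 1 ≤ (v.1:ℕ) ∧ 1 ≤ (v.2:ℕ) then q * d v Act.swap else 0) := by
  show (∑ v' : TwoV m1 m2, ∑ a : Act, Tzz m1 m2 p1 p2 q a v' v * d v a) = _
  rw [Finset.sum_comm]
  have key : ∀ a : Act, ∑ v' : TwoV m1 m2, Tzz m1 m2 p1 p2 q a v' v * d v a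
      = (1 - (if a = Act.swap ∧ 1 ≤ (v.1:ℕ) ∧ 1 ≤ (v.2:ℕ) then q else 0)) * d v a := by
    intro a; rw [← Finset.sum_mul, Tzz_colsum]
  rw [Finset.sum_congr rfl fun a _ => key a]
  simp only [sub_mul, one_mul, Finset.sum_sub_distrib, hd.2 v]
  congr 1
  rw [Finset.sum_eq_single_of_mem Act.swap (Finset.mem_univ _)]
  · by_cases h : 1 ≤ (v.1:ℕ) ∧ 1 ≤ (v.2:ℕ) <;> simp [h]
  · intro b _ hb
    rw [if_neg (by simp [hb]), zero_mul]

lemma sum_mulVec {V : Type*} [Fintype V] (A : Matrix V V ℝ) (h : V → ℝ) :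
    ∑ v' : V, A.mulVec h v' = ∑ v : V, (∑ v' : V, A v' v) * h v := by
  simp only [Matrix.mulVec, dotProduct]
  rw [Finset.sum_comm]
  exact Finset.sum_congr rfl fun v _ => by rw [Finset.sum_mul]

end Aux3
section Aux4

variable {V : Type*} [Fintype V] [DecidableEq V] [Nonempty V]

lemma pow_entry_nonneg (A : Matrix V V ℝ) (hA : ∀ i j, 0 ≤ A i j) (k : ℕ) (i j : V) :
    0 ≤ (A ^ k) i j := by
  induction k generalizing i j with
  | zero => simp [Matrix.one_apply]; split_ifs <;> norm_num
  | succ n ih =>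
      rw [pow_succ, Matrix.mul_apply]
      exact Finset.sum_nonneg fun l _ => mul_nonneg (ih i l) (hA l j)

lemma colsum_pow_mul (A B : Matrix V V ℝ) (j : V) :
    ∑ i, (A * B) i j = ∑ l, (∑ i, A i l) * B l j := by
  simp only [Matrix.mul_apply]
  rw [Finset.sum_comm]
  exact Finset.sum_congr rfl fun l _ => by rw [Finset.sum_mul]

lemma colsum_one (j : V) : ∑ i, (1 : Matrix V V ℝ) i j = 1 := by
  simp [Matrix.one_apply]

lemma colsum_pow_le_one (A : Matrix V V ℝ) (hA : ∀ i j, 0 ≤ A i j)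
    (hcol : ∀ j, ∑ i, A i j ≤ 1) (k : ℕ) (j : V) : ∑ i, (A ^ k) i j ≤ 1 := by
  induction k generalizing j with
  | zero => rw [pow_zero, colsum_one]
  | succ n ih =>
      rw [pow_succ, colsum_pow_mul]
      calc ∑ l, (∑ i, (A^n) i l) * A l j ≤ ∑ l, 1 * A l j := by
            refine Finset.sum_le_sum fun l _ => mul_le_mul_of_nonneg_right (ih l) (hA l j)
        _ = ∑ l, A l j := by simp
        _ ≤ 1 := hcol j

lemma colsum_pow_anti (A : Matrix V V ℝ) (hA : ∀ i j, 0 ≤ A i j)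
    (hcol : ∀ j, ∑ i, A i j ≤ 1) {k k' : ℕ} (hk : k ≤ k') (j : V) :
    ∑ i, (A ^ k') i j ≤ ∑ i, (A ^ k) i j := by
  obtain ⟨m, rfl⟩ := Nat.exists_eq_add_of_le hk
  rw [add_comm, pow_add, colsum_pow_mul]
  calc ∑ l, (∑ i, (A^m) i l) * (A^k) l j
      ≤ ∑ l, 1 * (A^k) l j := Finset.sum_le_sum fun l _ =>
        mul_le_mul_of_nonneg_right (colsum_pow_le_one A hA hcol m l) (pow_entry_nonneg A hA k l j)
    _ = ∑ l, (A^k) l j := by simp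

lemma pow_tendsto_zero_of_colsum (A : Matrix V V ℝ) (hA : ∀ i j, 0 ≤ A i j)
    (hcol : ∀ j, ∑ i, A i j ≤ 1) (habs : ∀ j, ∃ k, ∑ i, (A ^ k) i j < 1) :
    Tendsto (fun k : ℕ => A ^ k) atTop (nhds 0) := by
  classical
  choose kk hkk using habs
  set K := Finset.univ.sup kk with hK
  have hKk : ∀ j, kk j ≤ K := fun j => Finset.le_sup (Finset.mem_univ j)
  have hkk1 : ∀ j, 1 ≤ kk j := by
    intro j
    by_contra h
    have : kk j = 0 := by omega
    have h0 := hkk j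
    rw [this, pow_zero, colsum_one] at h0
    linarith
  have hK1 : 1 ≤ K := le_trans (hkk1 (Classical.arbitrary V)) (hKk _)
  have hcK : ∀ j, ∑ i, (A ^ K) i j < 1 := fun j =>
    lt_of_le_of_lt (colsum_pow_anti A hA hcol (hKk j) j) (hkk j)
  set β := Finset.univ.sup' Finset.univ_nonempty (fun j => ∑ i, (A ^ K) i j) with hβ
  have hβ1 : β < 1 := by
    rw [hβ, Finset.sup'_lt_iff]
    exact fun j _ => hcK j
  have hβub : ∀ j, ∑ i, (A ^ K) i j ≤ β := fun j =>
    Finset.le_sup' (fun j => ∑ i, (A ^ K) i j) (Finset.mem_univ j)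
  have hβ0 : 0 ≤ β := by
    refine le_trans ?_ (hβub (Classical.arbitrary V))
    exact Finset.sum_nonneg fun i _ => pow_entry_nonneg A hA K i _
  have hgeo : ∀ n j, ∑ i, (A ^ (n * K)) i j ≤ β ^ n := by
    intro n
    induction n with
    | zero => intro j; simpa using le_of_eq (colsum_one j)
    | succ n ih =>
        intro j
        have : (n + 1) * K = K + n * K := by ring
        rw [this, pow_add, colsum_pow_mul]
        calc ∑ l, (∑ i, (A^K) i l) * (A^(n*K)) l j
            ≤ ∑ l, β * (A^(n*K)) l j := Finset.sum_le_sum fun l _ =>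
              mul_le_mul_of_nonneg_right (hβub l) (pow_entry_nonneg A hA _ l j)
          _ = β * ∑ l, (A^(n*K)) l j := by rw [Finset.mul_sum]
          _ ≤ β * β ^ n := by
              exact mul_le_mul_of_nonneg_left (ih j) hβ0
          _ = β ^ (n+1) := by ring
  have hdiv : Tendsto (fun k : ℕ => k / K) atTop atTop := by
    apply tendsto_atTop_atTop.2
    intro n
    exact ⟨n * K, fun k hk => (Nat.le_div_iff_mul_le (by omega)).2 hk⟩
  have hpow : Tendsto (fun k : ℕ => β ^ (k / K)) atTop (nhds 0) :=
    (tendsto_pow_atTop_nhds_zero_of_lt_one hβ0 hβ1).comp hdiv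
  refine tendsto_pi_nhds.2 ?_
  intro i
  rw [tendsto_pi_nhds]
  intro j
  have hz : ((0 : Matrix V V ℝ)) i j = 0 := rfl
  rw [hz]
  apply squeeze_zero (fun k => pow_entry_nonneg A hA k i j) (g := fun k => β ^ (k / K))
  · intro k
    calc (A ^ k) i j ≤ ∑ i', (A ^ k) i' j :=
          Finset.single_le_sum (fun i' _ => pow_entry_nonneg A hA k i' j) (Finset.mem_univ i)
      _ ≤ ∑ i', (A ^ (K * (k / K))) i' j := by
          refine colsum_pow_anti A hA hcol ?_ j
          calc K * (k / K) = (k / K) * K := mul_comm _ _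
            _ ≤ k := Nat.div_mul_le_self k K
      _ ≤ β ^ (k / K) := by
          rw [mul_comm]
          exact hgeo (k / K) j
  · exact hpow

end Aux4
section Aux5

variable {V : Type*} [Fintype V] [DecidableEq V] [Nonempty V]

lemma entry_tendsto {A : Matrix V V ℝ} (h : Tendsto (fun k : ℕ => A ^ k) atTop (nhds 0))
    (i j : V) : Tendsto (fun k : ℕ => (A ^ k) i j) atTop (nhds 0) := by
  have h1 := (tendsto_pi_nhds.1 h) i
  have h2 := (tendsto_pi_nhds.1 h1) j
  simpa using h2

lemma mulVec_pow_tendsto {A : Matrix V V ℝ} (h : Tendsto (fun k : ℕ => A ^ k) atTop (nhds 0))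
    (x : V → ℝ) (i : V) : Tendsto (fun k : ℕ => (A ^ k).mulVec x i) atTop (nhds 0) := by
  have : ∀ k : ℕ, (A ^ k).mulVec x i = ∑ j, (A ^ k) i j * x j := fun k => rfl
  simp only [this]
  have := tendsto_finset_sum (Finset.univ : Finset V)
    (fun j _ => (entry_tendsto h i j).mul_const (x j))
  simpa using this

lemma isUnit_one_sub_det {A : Matrix V V ℝ} (h : Tendsto (fun k : ℕ => A ^ k) atTop (nhds 0)) :
    IsUnit (1 - A).det := by
  rw [isUnit_iff_ne_zero]
  intro hdet
  obtain ⟨v, hv, hv0⟩ := (Matrix.exists_mulVec_eq_zero_iff).2 hdet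
  have hAv : A.mulVec v = v := by
    have := hv0
    rw [Matrix.sub_mulVec, Matrix.one_mulVec] at this
    have := sub_eq_zero.1 this
    exact this.symm
  have hpow : ∀ k : ℕ, (A ^ k).mulVec v = v := by
    intro k
    induction k with
    | zero => simp [Matrix.one_mulVec]
    | succ n ih =>
        rw [pow_succ', ← Matrix.mulVec_mulVec, ih, hAv]
  obtain ⟨i, hi⟩ := Function.ne_iff.1 hv
  have h1 : Tendsto (fun k : ℕ => (A ^ k).mulVec v i) atTop (nhds 0) := mulVec_pow_tendsto h v i
  have h2 : Tendsto (fun k : ℕ => (A ^ k).mulVec v i) atTop (nhds (v i)) := by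
    simp only [hpow]; exact tendsto_const_nhds
  exact hi (tendsto_nhds_unique h2 h1)

lemma inv_mulVec_spec {A : Matrix V V ℝ} (h : Tendsto (fun k : ℕ => A ^ k) atTop (nhds 0))
    {x g : V → ℝ} (hx : (1 - A).mulVec x = g) : (1 - A)⁻¹.mulVec g = x := by
  rw [← hx, Matrix.mulVec_mulVec, Matrix.nonsing_inv_mul _ (isUnit_one_sub_det h),
    Matrix.one_mulVec]

lemma inv_mulVec_sat {A : Matrix V V ℝ} (h : Tendsto (fun k : ℕ => A ^ k) atTop (nhds 0))
    (g : V → ℝ) : (1 - A).mulVec ((1 - A)⁻¹.mulVec g) = g := by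
  rw [Matrix.mulVec_mulVec, Matrix.mul_nonsing_inv _ (isUnit_one_sub_det h),
    Matrix.one_mulVec]

lemma pow_mulVec_partial (A : Matrix V V ℝ) (x g : V → ℝ)
    (hxg : ∀ i, A.mulVec x i = x i - g i) :
    ∀ (n : ℕ) (i : V), (A ^ n).mulVec x i = x i - ∑ k ∈ Finset.range n, (A ^ k).mulVec g i := by
  intro n
  induction n with
  | zero => intro i; simp [Matrix.one_mulVec]
  | succ n ih =>
      intro i
      have hAx : A.mulVec x = fun i => x i - g i := funext hxg
      have : (A ^ (n+1)).mulVec x = (A ^ n).mulVec (A.mulVec x) := by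
        rw [Matrix.mulVec_mulVec, ← pow_succ]
      rw [this, hAx]
      have hsub : (A ^ n).mulVec (fun i => x i - g i) i
          = (A ^ n).mulVec x i - (A ^ n).mulVec g i := by
        have : (fun i => x i - g i) = x - g := rfl
        rw [this, Matrix.mulVec_sub]; rfl
      rw [hsub, ih i, Finset.sum_range_succ]
      ring

lemma act_card : Fintype.card Act = 5 := rfl

end Aux5
section Aux6

variable {m1 m2 : ℕ} {p1 p2 q : ℝ}

lemma ginit_nonneg (hp1 : 0 ≤ p1 ∧ p1 ≤ 1) (hp2 : 0 ≤ p2 ∧ p2 ≤ 1) (v : TwoV m1 m2) :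
    0 ≤ ginit m1 m2 p1 p2 v :=
  mul_nonneg (gvec_nonneg m1 hp1.1 hp1.2 v.1) (gvec_nonneg m2 hp2.1 hp2.2 v.2)

lemma ginit_sum : ∑ v : TwoV m1 m2, ginit m1 m2 p1 p2 v = 1 := by
  refine (prodsum' _ (gvec m1 p1) (gvec m2 p2) (fun v => rfl)).trans ?_
  rw [gvec_sum, gvec_sum]; norm_num

lemma feas_x_nonneg {x : TwoV m1 m2 → ℝ} {w : Act → TwoV m1 m2 → ℝ}
    (hf : Feas11 m1 m2 p1 p2 q x w) (v : TwoV m1 m2) : 0 ≤ x v := by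
  rw [← hf.2.2 v]
  exact Finset.sum_nonneg fun a _ => (hf.1 a v).1

/-- Summing the balance constraint over all states yields `q · (swap mass on plus states) = 1`. -/
lemma feas_q_identity {x : TwoV m1 m2 → ℝ} {w : Act → TwoV m1 m2 → ℝ}
    (hf : Feas11 m1 m2 p1 p2 q x w) :
    q * ∑ v : TwoV m1 m2,
      (if 1 ≤ (v.1:ℕ) ∧ 1 ≤ (v.2:ℕ) then w Act.swap v else 0) = 1 := by
  have h1 : ∑ v' : TwoV m1 m2,
      (x v' - ∑ a : Act, (Tzz m1 m2 p1 p2 q a).mulVec (w a) v') = 1 := by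
    rw [Finset.sum_congr rfl fun v' _ => hf.2.1 v', ginit_sum]
  rw [Finset.sum_sub_distrib] at h1
  have h2 : ∑ v' : TwoV m1 m2, ∑ a : Act, (Tzz m1 m2 p1 p2 q a).mulVec (w a) v'
      = ∑ v : TwoV m1 m2, x v
        - q * ∑ v : TwoV m1 m2, (if 1 ≤ (v.1:ℕ) ∧ 1 ≤ (v.2:ℕ) then w Act.swap v else 0) := by
    rw [Finset.sum_comm]
    have hA : ∀ a : Act, ∑ v' : TwoV m1 m2, (Tzz m1 m2 p1 p2 q a).mulVec (w a) v'
        = ∑ v : TwoV m1 m2,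
            (1 - (if a = Act.swap ∧ 1 ≤ (v.1:ℕ) ∧ 1 ≤ (v.2:ℕ) then q else 0)) * w a v := by
      intro a
      rw [_root_.sum_mulVec]
      exact Finset.sum_congr rfl fun v _ => by rw [Tzz_colsum]
    rw [Finset.sum_congr rfl fun a _ => hA a]
    have : ∀ a : Act, ∑ v : TwoV m1 m2,
        (1 - (if a = Act.swap ∧ 1 ≤ (v.1:ℕ) ∧ 1 ≤ (v.2:ℕ) then q else 0)) * w a v
        = ∑ v : TwoV m1 m2, w a v
          - ∑ v : TwoV m1 m2, (if a = Act.swap ∧ 1 ≤ (v.1:ℕ) ∧ 1 ≤ (v.2:ℕ) then q else 0) * w a v := by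
      intro a
      rw [← Finset.sum_sub_distrib]
      exact Finset.sum_congr rfl fun v _ => by ring
    rw [Finset.sum_congr rfl fun a _ => this a, Finset.sum_sub_distrib]
    have hsw : ∑ a : Act, ∑ v : TwoV m1 m2, w a v = ∑ v : TwoV m1 m2, x v := by
      rw [Finset.sum_comm]
      exact Finset.sum_congr rfl fun v _ => hf.2.2 v
    rw [hsw]
    congr 1
    rw [Finset.sum_eq_single_of_mem Act.swap (Finset.mem_univ _)]
    · rw [Finset.mul_sum]
      refine Finset.sum_congr rfl fun v _ => ?_
      by_cases h : 1 ≤ (v.1:ℕ) ∧ 1 ≤ (v.2:ℕ) <;> simp [h]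
    · intro b _ hb
      refine Finset.sum_eq_zero fun v _ => ?_
      rw [if_neg (by simp [hb]), zero_mul]
  rw [h2] at h1
  linarith

lemma feas_q_pos (hq : 0 ≤ q ∧ q ≤ 1) {x : TwoV m1 m2 → ℝ} {w : Act → TwoV m1 m2 → ℝ}
    (hf : Feas11 m1 m2 p1 p2 q x w) : 0 < q := by
  rcases lt_or_eq_of_le hq.1 with h | h
  · exact h
  · exfalso
    have := feas_q_identity hf
    rw [← h, zero_mul] at this
    norm_num at this

lemma Tzz_layer1 (hp1 : p1 = 0) (a : Act) (v' v : TwoV m1 m2)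
    (hv : (v.1:ℕ) = 0) (hv' : (v'.1:ℕ) ≠ 0) : Tzz m1 m2 p1 p2 q a v' v = 0 := by
  have hv0 : v.1 = 0 := Fin.ext (by simp [hv])
  have hv0' : v'.1 ≠ 0 := fun h => hv' (by simp [h])
  cases a with
  | a00 => show Tw m1 v'.1 v.1 * Tw m2 v'.2 v.2 = 0; simp [Tw, hv, hv', hv0, hv0']
  | a01 => show Tw m1 v'.1 v.1 * Tr m2 p2 v'.2 v.2 = 0; simp [Tw, hv, hv', hv0, hv0']
  | a10 => show Tr m1 p1 v'.1 v.1 * Tw m2 v'.2 v.2 = 0; simp [Tr, hv, hv', hp1, hv0, hv0']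
  | a11 => show Tr m1 p1 v'.1 v.1 * Tr m2 p2 v'.2 v.2 = 0; simp [Tr, hv, hv', hp1, hv0, hv0']
  | swap =>
      show (1 - q) * (gvec m1 p1 v'.1 * gvec m2 p2 v'.2) * (gammaPlus m1 v.1 * gammaPlus m2 v.2)
        + shiftS m1 v'.1 v.1 * (if (v'.2 : ℕ) = 0 ∧ (v.2 : ℕ) = 0 then 1 else 0)
        + (if (v'.1 : ℕ) = 0 ∧ (v.1 : ℕ) = 0 then 1 else 0) * shiftS m2 v'.2 v.2
        + (if (v'.1 : ℕ) = 0 ∧ (v'.2 : ℕ) = 0 ∧ (v.1 : ℕ) = 0 ∧ (v.2 : ℕ) = 0 then 1 else 0)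
        + (if (v'.1 : ℕ) = 0 ∧ (v'.2 : ℕ) = 0 ∧ (v.1 : ℕ) = 0 ∧ (v.2 : ℕ) = m2 + 1 then 1 else 0)
        + (if (v'.1 : ℕ) = 0 ∧ (v'.2 : ℕ) = 0 ∧ (v.1 : ℕ) = m1 + 1 ∧ (v.2 : ℕ) = 0 then 1 else 0) = 0
      simp [gammaPlus, shiftS, hv, hv']

lemma Tzz_layer2 (hp2 : p2 = 0) (a : Act) (v' v : TwoV m1 m2)
    (hv : (v.2:ℕ) = 0) (hv' : (v'.2:ℕ) ≠ 0) : Tzz m1 m2 p1 p2 q a v' v = 0 := by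
  have hv0 : v.2 = 0 := Fin.ext (by simp [hv])
  have hv0' : v'.2 ≠ 0 := fun h => hv' (by simp [h])
  cases a with
  | a00 => show Tw m1 v'.1 v.1 * Tw m2 v'.2 v.2 = 0; simp [Tw, hv, hv', hv0, hv0']
  | a01 => show Tw m1 v'.1 v.1 * Tr m2 p2 v'.2 v.2 = 0; simp [Tr, hv, hv', hp2, hv0, hv0']
  | a10 => show Tr m1 p1 v'.1 v.1 * Tw m2 v'.2 v.2 = 0; simp [Tw, hv, hv', hv0, hv0']
  | a11 => show Tr m1 p1 v'.1 v.1 * Tr m2 p2 v'.2 v.2 = 0; simp [Tr, hv, hv', hp2, hv0, hv0']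
  | swap =>
      show (1 - q) * (gvec m1 p1 v'.1 * gvec m2 p2 v'.2) * (gammaPlus m1 v.1 * gammaPlus m2 v.2)
        + shiftS m1 v'.1 v.1 * (if (v'.2 : ℕ) = 0 ∧ (v.2 : ℕ) = 0 then 1 else 0)
        + (if (v'.1 : ℕ) = 0 ∧ (v.1 : ℕ) = 0 then 1 else 0) * shiftS m2 v'.2 v.2
        + (if (v'.1 : ℕ) = 0 ∧ (v'.2 : ℕ) = 0 ∧ (v.1 : ℕ) = 0 ∧ (v.2 : ℕ) = 0 then 1 else 0)
        + (if (v'.1 : ℕ) = 0 ∧ (v'.2 : ℕ) = 0 ∧ (v.1 : ℕ) = 0 ∧ (v.2 : ℕ) = m2 + 1 then 1 else 0)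
        + (if (v'.1 : ℕ) = 0 ∧ (v'.2 : ℕ) = 0 ∧ (v.1 : ℕ) = m1 + 1 ∧ (v.2 : ℕ) = 0 then 1 else 0) = 0
      simp [gammaPlus, shiftS, hv, hv']

end Aux6
section Aux7

variable {m1 m2 : ℕ} {p1 p2 q : ℝ}

lemma sum_ite_gvec (ms : ℕ) (p : ℝ) :
    ∑ s : Fin (ms + 2), (if (s:ℕ) = 0 then (1:ℝ) else 0) * gvec ms p s = 1 - p := by
  rw [Finset.sum_eq_single_of_mem (⟨0, by omega⟩ : Fin (ms+2)) (Finset.mem_univ _)]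
  · show (if ((0:ℕ) = 0) then (1:ℝ) else 0) * gvec ms p ⟨0, by omega⟩ = 1 - p
    rw [if_pos rfl, one_mul]
    show (if ((0:ℕ) = 0) then 1 - p else _) = 1 - p
    rw [if_pos rfl]
  · intro b _ hb
    rw [if_neg (fun h => hb (Fin.ext h)), zero_mul]

lemma feas_B_identity (x : TwoV m1 m2 → ℝ) (w : Act → TwoV m1 m2 → ℝ) (φ : TwoV m1 m2 → ℝ) :
    ∑ v' : TwoV m1 m2, φ v' * (∑ a : Act, (Tzz m1 m2 p1 p2 q a).mulVec (w a) v')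
      = ∑ a : Act, ∑ v : TwoV m1 m2,
          (∑ v' : TwoV m1 m2, φ v' * Tzz m1 m2 p1 p2 q a v' v) * w a v := by
  have e1 : ∀ v' : TwoV m1 m2, φ v' * (∑ a : Act, (Tzz m1 m2 p1 p2 q a).mulVec (w a) v')
      = ∑ a : Act, ∑ v : TwoV m1 m2, φ v' * (Tzz m1 m2 p1 p2 q a v' v * w a v) := by
    intro v'
    rw [Finset.mul_sum]
    refine Finset.sum_congr rfl fun a _ => ?_
    show φ v' * (∑ v, Tzz m1 m2 p1 p2 q a v' v * w a v) = _
    rw [Finset.mul_sum]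
  rw [Finset.sum_congr rfl fun v' _ => e1 v', Finset.sum_comm]
  refine Finset.sum_congr rfl fun a _ => ?_
  rw [Finset.sum_comm]
  refine Finset.sum_congr rfl fun v _ => ?_
  rw [Finset.sum_mul]
  exact Finset.sum_congr rfl fun v' _ => by ring

lemma feas_p1_pos (hp1 : 0 ≤ p1 ∧ p1 ≤ 1) (hp2 : 0 ≤ p2 ∧ p2 ≤ 1) (hq : 0 ≤ q ∧ q ≤ 1)
    {x : TwoV m1 m2 → ℝ} {w : Act → TwoV m1 m2 → ℝ}
    (hf : Feas11 m1 m2 p1 p2 q x w) : 0 < p1 := by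
  rcases lt_or_eq_of_le hp1.1 with h | h
  · exact h
  exfalso
  have hp : p1 = 0 := h.symm
  set φ : TwoV m1 m2 → ℝ := fun v => if (v.1:ℕ) = 0 then (1:ℝ) else 0 with hφ
  have hφnn : ∀ v, 0 ≤ φ v := fun v => by rw [hφ]; dsimp; split_ifs <;> norm_num
  have claim : ∀ (a : Act) (v : TwoV m1 m2),
      φ v ≤ ∑ v' : TwoV m1 m2, φ v' * Tzz m1 m2 p1 p2 q a v' v := by
    intro a v
    by_cases hv : (v.1:ℕ) = 0
    · have e : ∀ v' : TwoV m1 m2, φ v' * Tzz m1 m2 p1 p2 q a v' v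
          = Tzz m1 m2 p1 p2 q a v' v := by
        intro v'
        by_cases h' : (v'.1:ℕ) = 0
        · rw [hφ]; dsimp; rw [if_pos h', one_mul]
        · rw [Tzz_layer1 hp a v' v hv h', mul_zero]
      rw [Finset.sum_congr rfl fun v' _ => e v', Tzz_colsum,
        if_neg (by rintro ⟨-, h1, -⟩; omega), sub_zero, hφ]
      dsimp; rw [if_pos hv]
    · rw [hφ]; dsimp; rw [if_neg hv]
      exact Finset.sum_nonneg fun v' _ =>
        mul_nonneg (hφnn v') (Tzz_nonneg hp1 hp2 hq a v' v)
  have E1 : ∑ v' : TwoV m1 m2, φ v' * ginit m1 m2 p1 p2 v' = 1 := by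
    refine (prodsum' _ (fun s => (if (s:ℕ) = 0 then (1:ℝ) else 0) * gvec m1 p1 s)
      (gvec m2 p2) (fun v => by rw [hφ]; show (if (v.1:ℕ) = 0 then (1:ℝ) else 0) * (gvec m1 p1 v.1 * gvec m2 p2 v.2) = _; ring)).trans ?_
    rw [sum_ite_gvec, gvec_sum, hp]; norm_num
  have hsum0 : ∑ v' : TwoV m1 m2,
      φ v' * (x v' - ∑ a : Act, (Tzz m1 m2 p1 p2 q a).mulVec (w a) v') = 1 := by
    rw [Finset.sum_congr rfl fun v' _ => by rw [hf.2.1 v'], E1]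
  have hexp : ∑ v' : TwoV m1 m2,
      φ v' * (x v' - ∑ a : Act, (Tzz m1 m2 p1 p2 q a).mulVec (w a) v')
      = ∑ v' : TwoV m1 m2, φ v' * x v'
        - ∑ v' : TwoV m1 m2, φ v' * (∑ a : Act, (Tzz m1 m2 p1 p2 q a).mulVec (w a) v') := by
    rw [← Finset.sum_sub_distrib]
    exact Finset.sum_congr rfl fun v' _ => by ring
  have hBge : ∑ v' : TwoV m1 m2, φ v' * x v'
      ≤ ∑ v' : TwoV m1 m2, φ v' * (∑ a : Act, (Tzz m1 m2 p1 p2 q a).mulVec (w a) v') := by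
    rw [feas_B_identity x w φ]
    have : ∑ v' : TwoV m1 m2, φ v' * x v'
        = ∑ a : Act, ∑ v : TwoV m1 m2, φ v * w a v := by
      rw [Finset.sum_comm]
      refine Finset.sum_congr rfl fun v _ => ?_
      rw [← Finset.mul_sum, hf.2.2 v]
    rw [this]
    refine Finset.sum_le_sum fun a _ => Finset.sum_le_sum fun v _ =>
      mul_le_mul_of_nonneg_right (claim a v) (hf.1 a v).1
  rw [hexp] at hsum0
  linarith

lemma feas_p2_pos (hp1 : 0 ≤ p1 ∧ p1 ≤ 1) (hp2 : 0 ≤ p2 ∧ p2 ≤ 1) (hq : 0 ≤ q ∧ q ≤ 1)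
    {x : TwoV m1 m2 → ℝ} {w : Act → TwoV m1 m2 → ℝ}
    (hf : Feas11 m1 m2 p1 p2 q x w) : 0 < p2 := by
  rcases lt_or_eq_of_le hp2.1 with h | h
  · exact h
  exfalso
  have hp : p2 = 0 := h.symm
  set φ : TwoV m1 m2 → ℝ := fun v => if (v.2:ℕ) = 0 then (1:ℝ) else 0 with hφ
  have hφnn : ∀ v, 0 ≤ φ v := fun v => by rw [hφ]; dsimp; split_ifs <;> norm_num
  have claim : ∀ (a : Act) (v : TwoV m1 m2),
      φ v ≤ ∑ v' : TwoV m1 m2, φ v' * Tzz m1 m2 p1 p2 q a v' v := by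
    intro a v
    by_cases hv : (v.2:ℕ) = 0
    · have e : ∀ v' : TwoV m1 m2, φ v' * Tzz m1 m2 p1 p2 q a v' v
          = Tzz m1 m2 p1 p2 q a v' v := by
        intro v'
        by_cases h' : (v'.2:ℕ) = 0
        · rw [hφ]; dsimp; rw [if_pos h', one_mul]
        · rw [Tzz_layer2 hp a v' v hv h', mul_zero]
      rw [Finset.sum_congr rfl fun v' _ => e v', Tzz_colsum,
        if_neg (by rintro ⟨-, -, h1⟩; omega), sub_zero, hφ]
      dsimp; rw [if_pos hv]
    · rw [hφ]; dsimp; rw [if_neg hv]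
      exact Finset.sum_nonneg fun v' _ =>
        mul_nonneg (hφnn v') (Tzz_nonneg hp1 hp2 hq a v' v)
  have E1 : ∑ v' : TwoV m1 m2, φ v' * ginit m1 m2 p1 p2 v' = 1 := by
    refine (prodsum' _ (gvec m1 p1)
      (fun s => (if (s:ℕ) = 0 then (1:ℝ) else 0) * gvec m2 p2 s)
      (fun v => by rw [hφ]; show (if (v.2:ℕ) = 0 then (1:ℝ) else 0) * (gvec m1 p1 v.1 * gvec m2 p2 v.2) = _; ring)).trans ?_
    rw [sum_ite_gvec, gvec_sum, hp]; norm_num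
  have hsum0 : ∑ v' : TwoV m1 m2,
      φ v' * (x v' - ∑ a : Act, (Tzz m1 m2 p1 p2 q a).mulVec (w a) v') = 1 := by
    rw [Finset.sum_congr rfl fun v' _ => by rw [hf.2.1 v'], E1]
  have hexp : ∑ v' : TwoV m1 m2,
      φ v' * (x v' - ∑ a : Act, (Tzz m1 m2 p1 p2 q a).mulVec (w a) v')
      = ∑ v' : TwoV m1 m2, φ v' * x v'
        - ∑ v' : TwoV m1 m2, φ v' * (∑ a : Act, (Tzz m1 m2 p1 p2 q a).mulVec (w a) v') := by
    rw [← Finset.sum_sub_distrib]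
    exact Finset.sum_congr rfl fun v' _ => by ring
  have hBge : ∑ v' : TwoV m1 m2, φ v' * x v'
      ≤ ∑ v' : TwoV m1 m2, φ v' * (∑ a : Act, (Tzz m1 m2 p1 p2 q a).mulVec (w a) v') := by
    rw [feas_B_identity x w φ]
    have : ∑ v' : TwoV m1 m2, φ v' * x v'
        = ∑ a : Act, ∑ v : TwoV m1 m2, φ v * w a v := by
      rw [Finset.sum_comm]
      refine Finset.sum_congr rfl fun v _ => ?_
      rw [← Finset.mul_sum, hf.2.2 v]
    rw [this]
    refine Finset.sum_le_sum fun a _ => Finset.sum_le_sum fun v _ =>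
      mul_le_mul_of_nonneg_right (claim a v) (hf.1 a v).1
  rw [hexp] at hsum0
  linarith

end Aux7
section Aux8

variable {m1 m2 : ℕ} {p1 p2 q : ℝ}

lemma dir1 (hp1 : 0 ≤ p1 ∧ p1 ≤ 1) (hp2 : 0 ≤ p2 ∧ p2 ≤ 1) (hq : 0 ≤ q ∧ q ≤ 1)
    (d : TwoV m1 m2 → Act → ℝ) (hd : ValidDec d)
    (ht : Tendsto (fun k : ℕ => Qmat m1 m2 p1 p2 q d ^ k) atTop (nhds 0)) :
    Feas11 m1 m2 p1 p2 q
      (((1 - Qmat m1 m2 p1 p2 q d)⁻¹).mulVec (ginit m1 m2 p1 p2))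
      (fun a v => d v a * ((1 - Qmat m1 m2 p1 p2 q d)⁻¹).mulVec (ginit m1 m2 p1 p2) v) := by
  set Q := Qmat m1 m2 p1 p2 q d with hQ
  set g := ginit m1 m2 p1 p2 with hg
  set x := ((1 - Q)⁻¹).mulVec g with hx
  have hsat : (1 - Q).mulVec x = g := inv_mulVec_sat ht g
  have hxg : ∀ i, Q.mulVec x i = x i - g i := by
    intro i
    have := congrFun hsat i
    rw [Matrix.sub_mulVec, Matrix.one_mulVec] at this
    have : x i - Q.mulVec x i = g i := this
    linarith
  have hQnn : ∀ i j, 0 ≤ Q i j := Qmat_nonneg hp1 hp2 hq hd.1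
  have hgnn : ∀ v, 0 ≤ g v := ginit_nonneg hp1 hp2
  -- nonnegativity of x
  have hxnn : ∀ i, 0 ≤ x i := by
    intro i
    have hpart := pow_mulVec_partial Q x g hxg
    have hlim : Tendsto (fun n : ℕ => ∑ k ∈ Finset.range n, (Q ^ k).mulVec g i)
        atTop (nhds (x i)) := by
      have h1 : ∀ n : ℕ, ∑ k ∈ Finset.range n, (Q ^ k).mulVec g i
          = x i - (Q ^ n).mulVec x i := by
        intro n; have := hpart n i; linarith
      simp only [h1]
      have := (mulVec_pow_tendsto ht x i).const_sub (x i)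
      simpa using this
    refine ge_of_tendsto' hlim fun n => ?_
    refine Finset.sum_nonneg fun k _ => Finset.sum_nonneg fun j _ =>
      mul_nonneg (pow_entry_nonneg Q hQnn k i j) (hgnn j)
  have hd1 : ∀ v a, d v a ≤ 1 := by
    intro v a
    have := Finset.single_le_sum (f := fun a => d v a) (fun a _ => hd.1 v a) (Finset.mem_univ a)
    rw [hd.2 v] at this
    exact this
  refine ⟨fun a s => ⟨mul_nonneg (hd.1 s a) (hxnn s), ?_⟩, fun s' => ?_, fun s => ?_⟩
  · calc d s a * x s ≤ 1 * x s := mul_le_mul_of_nonneg_right (hd1 s a) (hxnn s)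
      _ = x s := one_mul _
  · have key : ∑ a : Act, (Tzz m1 m2 p1 p2 q a).mulVec (fun v => d v a * x v) s'
        = Q.mulVec x s' := by
      show ∑ a : Act, ∑ v, Tzz m1 m2 p1 p2 q a s' v * (d v a * x v)
        = ∑ v, (∑ a : Act, Tzz m1 m2 p1 p2 q a s' v * d v a) * x v
      rw [Finset.sum_comm]
      refine Finset.sum_congr rfl fun v _ => ?_
      rw [Finset.sum_mul]
      exact Finset.sum_congr rfl fun a _ => by ring
    rw [key, hxg s']
    ring
  · rw [← Finset.sum_mul, hd.2 s, one_mul]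

end Aux8
section Aux9

variable {m1 m2 : ℕ} {p1 p2 q : ℝ}

lemma dir2 (hp1 : 0 ≤ p1 ∧ p1 ≤ 1) (hp2 : 0 ≤ p2 ∧ p2 ≤ 1) (hq : 0 ≤ q ∧ q ≤ 1)
    (x : TwoV m1 m2 → ℝ) (w : Act → TwoV m1 m2 → ℝ) (hf : Feas11 m1 m2 p1 p2 q x w) :
    ∃ d : TwoV m1 m2 → Act → ℝ, ValidDec d ∧
      Tendsto (fun k : ℕ => Qmat m1 m2 p1 p2 q d ^ k) atTop (nhds 0) ∧
      ∑ v' : TwoV m1 m2, ((1 - Qmat m1 m2 p1 p2 q d)⁻¹).mulVec (ginit m1 m2 p1 p2) v'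
        ≤ ∑ v : TwoV m1 m2, x v := by
  classical
  have hq0 : 0 < q := feas_q_pos hq hf
  have hp10 : 0 < p1 := feas_p1_pos hp1 hp2 hq hf
  have hp20 : 0 < p2 := feas_p2_pos hp1 hp2 hq hf
  have hxnn : ∀ v, 0 ≤ x v := feas_x_nonneg hf
  set g : TwoV m1 m2 → ℝ := ginit m1 m2 p1 p2 with hgdef
  have hgnn : ∀ v, 0 ≤ g v := ginit_nonneg hp1 hp2
  have hwzero : ∀ (a : Act) v, x v = 0 → w a v = 0 := fun a v h =>
    le_antisymm (h ▸ (hf.1 a v).2) (hf.1 a v).1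
  -- base policy d0 = w / x
  set d0 : TwoV m1 m2 → Act → ℝ :=
    fun v a => if x v = 0 then (5:ℝ)⁻¹ else w a v / x v with hd0def
  have hd0 : ValidDec d0 := by
    constructor
    · intro v a
      rw [hd0def]; dsimp only
      split_ifs with h
      · norm_num
      · exact div_nonneg (hf.1 a v).1 (hxnn v)
    · intro v
      rw [hd0def]; dsimp only
      by_cases h : x v = 0
      · have e : ∀ a : Act, (if x v = 0 then (5:ℝ)⁻¹ else w a v / x v) = (5:ℝ)⁻¹ :=
          fun a => if_pos h
        rw [Finset.sum_congr rfl fun a _ => e a, Finset.sum_const, Finset.card_univ, act_card]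
        norm_num
      · simp only [if_neg h]
        rw [← Finset.sum_div, hf.2.2 v, div_self h]
  set Q0 := Qmat m1 m2 p1 p2 q d0 with hQ0def
  have hQ0nn : ∀ i j, 0 ≤ Q0 i j := Qmat_nonneg hp1 hp2 hq hd0.1
  have hQ0x : ∀ v', Q0.mulVec x v' = x v' - g v' := by
    intro v'
    have e : ∀ v, (∑ a : Act, Tzz m1 m2 p1 p2 q a v' v * d0 v a) * x v
        = ∑ a : Act, Tzz m1 m2 p1 p2 q a v' v * w a v := by
      intro v
      by_cases hxv : x v = 0
      · rw [hxv, mul_zero]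
        symm
        exact Finset.sum_eq_zero fun a _ => by rw [hwzero a v hxv, mul_zero]
      · rw [Finset.sum_mul]
        refine Finset.sum_congr rfl fun a _ => ?_
        have : d0 v a * x v = w a v := by
          rw [hd0def]; dsimp only; rw [if_neg hxv, div_mul_cancel₀ _ hxv]
        rw [mul_assoc, this]
    have e2 : Q0.mulVec x v' = ∑ a : Act, (Tzz m1 m2 p1 p2 q a).mulVec (w a) v' := by
      show (∑ v, (∑ a : Act, Tzz m1 m2 p1 p2 q a v' v * d0 v a) * x v) = _
      rw [Finset.sum_congr rfl fun v _ => e v, Finset.sum_comm]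
      rfl
    have := hf.2.1 v'
    rw [e2]
    linarith
  -- reachable set
  set R : Set (TwoV m1 m2) := {v | ∃ k : ℕ, 0 < (Q0 ^ k).mulVec g v} with hRdef
  set d : TwoV m1 m2 → Act → ℝ := fun v a => if v ∈ R then d0 v a else (5:ℝ)⁻¹ with hddef
  have hd : ValidDec d := by
    constructor
    · intro v a
      rw [hddef]; dsimp only
      split_ifs with h
      · exact hd0.1 v a
      · norm_num
    · intro v
      rw [hddef]; dsimp only
      by_cases h : v ∈ R
      · simp only [if_pos h]; exact hd0.2 v
      · simp only [if_neg h]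
        rw [Finset.sum_const, Finset.card_univ, act_card]
        norm_num
  set Q := Qmat m1 m2 p1 p2 q d with hQdef
  have hQnn : ∀ i j, 0 ≤ Q i j := Qmat_nonneg hp1 hp2 hq hd.1
  have hQcol : ∀ v, ∑ v', Q v' v ≤ 1 := by
    intro v
    rw [hQdef, Qmat_colsum hd v]
    have : 0 ≤ (if 1 ≤ (v.1:ℕ) ∧ 1 ≤ (v.2:ℕ) then q * d v Act.swap else 0) := by
      split_ifs
      · exact mul_nonneg hq.1 (hd.1 v _)
      · exact le_refl 0
    linarith
  have hQcolR : ∀ v ∈ R, ∀ v', Q v' v = Q0 v' v := by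
    intro v hv v'
    show (∑ a : Act, Tzz m1 m2 p1 p2 q a v' v * d v a)
      = ∑ a : Act, Tzz m1 m2 p1 p2 q a v' v * d0 v a
    refine Finset.sum_congr rfl fun a _ => ?_
    rw [hddef]; dsimp only; rw [if_pos hv]
  -- transfer of trajectories started from g
  have htrans : ∀ k : ℕ, (∀ v', (Q ^ k).mulVec g v' = (Q0 ^ k).mulVec g v')
      ∧ (∀ v' ∉ R, (Q0 ^ k).mulVec g v' = 0) := by
    intro k
    induction k with
    | zero =>
        constructor
        · intro v'; rw [pow_zero, pow_zero]
        · intro v' hv'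
          rw [pow_zero, Matrix.one_mulVec]
          have h1 : ¬ 0 < (Q0 ^ 0).mulVec g v' := fun h => hv' ⟨0, h⟩
          rw [pow_zero, Matrix.one_mulVec] at h1
          exact le_antisymm (not_lt.1 h1) (hgnn v')
    | succ k ih =>
        have hynn : ∀ v, 0 ≤ (Q0 ^ k).mulVec g v := fun v =>
          Finset.sum_nonneg fun u _ => mul_nonneg (pow_entry_nonneg Q0 hQ0nn k v u) (hgnn u)
        constructor
        · intro v'
          rw [pow_succ', ← Matrix.mulVec_mulVec, pow_succ', ← Matrix.mulVec_mulVec]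
          show (∑ v, Q v' v * (Q ^ k).mulVec g v) = ∑ v, Q0 v' v * (Q0 ^ k).mulVec g v
          refine Finset.sum_congr rfl fun v _ => ?_
          rw [ih.1 v]
          by_cases hv : v ∈ R
          · rw [hQcolR v hv v']
          · rw [ih.2 v hv, mul_zero, mul_zero]
        · intro v' hv'
          rw [pow_succ', ← Matrix.mulVec_mulVec]
          show (∑ v, Q0 v' v * (Q0 ^ k).mulVec g v) = 0
          refine Finset.sum_eq_zero fun v _ => ?_
          by_contra hne
          apply hv'
          have hq0v : Q0 v' v ≠ 0 := fun h => hne (by rw [h, zero_mul])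
          have hgkv : (Q0 ^ k).mulVec g v ≠ 0 := fun h => hne (by rw [h, mul_zero])
          have hpos : 0 < (Q0 ^ k).mulVec g v := lt_of_le_of_ne (hynn v) (Ne.symm hgkv)
          have hQ0pos : 0 < Q0 v' v := lt_of_le_of_ne (hQ0nn v' v) (Ne.symm hq0v)
          refine ⟨k + 1, ?_⟩
          rw [pow_succ', ← Matrix.mulVec_mulVec]
          have hterm : 0 < Q0 v' v * (Q0 ^ k).mulVec g v := mul_pos hQ0pos hpos
          exact lt_of_lt_of_le hterm (Finset.single_le_sum
            (fun u _ => mul_nonneg (hQ0nn v' u) (hynn u)) (Finset.mem_univ v))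
  -- partial sums of the series ∑ Q^k g
  set y : ℕ → TwoV m1 m2 → ℝ := fun n v => ∑ k ∈ Finset.range n, (Q ^ k).mulVec g v
    with hydef
  have hQkg_nn : ∀ (k : ℕ) v, 0 ≤ (Q ^ k).mulVec g v := fun k v =>
    Finset.sum_nonneg fun u _ => mul_nonneg (pow_entry_nonneg Q hQnn k v u) (hgnn u)
  have hyx : ∀ (n : ℕ) v, y n v ≤ x v := by
    intro n v
    have e : y n v = ∑ k ∈ Finset.range n, (Q0 ^ k).mulVec g v := by
      rw [hydef]; exact Finset.sum_congr rfl fun k _ => (htrans k).1 v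
    have hpart := pow_mulVec_partial Q0 x g (fun i => hQ0x i) n v
    have hnn : 0 ≤ (Q0 ^ n).mulVec x v :=
      Finset.sum_nonneg fun u _ => mul_nonneg (pow_entry_nonneg Q0 hQ0nn n v u) (hxnn u)
    rw [e]
    linarith
  have hymono : ∀ v, Monotone fun n => y n v := by
    intro v
    refine monotone_nat_of_le_succ fun n => ?_
    rw [hydef]; dsimp only
    rw [Finset.sum_range_succ]
    exact le_add_of_nonneg_right (hQkg_nn n v)
  have hybdd : ∀ v, BddAbove (Set.range fun n => y n v) := fun v =>
    ⟨x v, by rintro _ ⟨n, rfl⟩; exact hyx n v⟩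
  set ylim : TwoV m1 m2 → ℝ := fun v => ⨆ n, y n v with hyldef
  have hytend : ∀ v, Tendsto (fun n => y n v) atTop (nhds (ylim v)) := fun v =>
    tendsto_atTop_ciSup (hymono v) (hybdd v)
  have hylim_le : ∀ v, ylim v ≤ x v := fun v => ciSup_le fun n => hyx n v
  have hterm0 : ∀ v, Tendsto (fun k : ℕ => (Q ^ k).mulVec g v) atTop (nhds 0) := by
    intro v
    have h1 : ∀ k : ℕ, (Q ^ k).mulVec g v = y (k+1) v - y k v := by
      intro k
      rw [hydef]; dsimp only
      rw [Finset.sum_range_succ]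
      ring
    simp only [h1]
    have := ((hytend v).comp (tendsto_add_atTop_nat 1)).sub (hytend v)
    simpa using this
  have hsurv : Tendsto (fun k : ℕ => ∑ v', (Q ^ k).mulVec g v') atTop (nhds 0) := by
    have := tendsto_finset_sum (Finset.univ : Finset (TwoV m1 m2)) fun v _ => hterm0 v
    simpa using this
  -- absorption from reachable states
  have habsR : ∀ j ∈ R, ∃ k : ℕ, ∑ i, (Q ^ k) i j < 1 := by
    intro j hj
    obtain ⟨k0, hk0⟩ := hj
    have hk0' : 0 < (Q ^ k0).mulVec g j := by rw [(htrans k0).1 j]; exact hk0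
    have hs' : Tendsto (fun m : ℕ => ∑ v', (Q ^ (m + k0)).mulVec g v') atTop (nhds 0) :=
      hsurv.comp (tendsto_add_atTop_nat k0)
    obtain ⟨m, hm⟩ := (hs'.eventually_lt_const hk0').exists
    refine ⟨m, ?_⟩
    have key : (∑ i, (Q ^ m) i j) * (Q ^ k0).mulVec g j
        ≤ ∑ v', (Q ^ (m + k0)).mulVec g v' := by
      have e : ∀ v', (Q ^ (m + k0)).mulVec g v' = (Q ^ m).mulVec ((Q ^ k0).mulVec g) v' := by
        intro v'; rw [Matrix.mulVec_mulVec, ← pow_add]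
      rw [Finset.sum_congr rfl fun v' _ => e v', _root_.sum_mulVec]
      exact Finset.single_le_sum
        (f := fun u => (∑ v', (Q ^ m) v' u) * (Q ^ k0).mulVec g u)
        (fun u _ => mul_nonneg (Finset.sum_nonneg fun i _ => pow_entry_nonneg Q hQnn m i u)
          (hQkg_nn k0 u)) (Finset.mem_univ j)
    nlinarith [hk0', key, hm]
  -- the distinguished plus-state
  have habs : ∀ j, ∃ k : ℕ, ∑ i, (Q ^ k) i j < 1 := by
    set vstar : TwoV m1 m2 := (⟨1, by omega⟩, ⟨1, by omega⟩) with hvstar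
    have hvplus : 1 ≤ (vstar.1:ℕ) ∧ 1 ≤ (vstar.2:ℕ) := by
      rw [hvstar]; exact ⟨le_refl 1, le_refl 1⟩
    obtain ⟨ks, hks⟩ : ∃ k : ℕ, ∑ i, (Q ^ k) i vstar < 1 := by
      by_cases hvR : vstar ∈ R
      · exact habsR vstar hvR
      · refine ⟨1, ?_⟩
        rw [pow_one, hQdef, Qmat_colsum hd vstar, if_pos hvplus]
        have hdstar : d vstar Act.swap = (5:ℝ)⁻¹ := by
          rw [hddef]; dsimp only; rw [if_neg hvR]
        rw [hdstar]
        nlinarith [hq0]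
    intro j
    by_cases hj : j ∈ R
    · exact habsR j hj
    · refine ⟨ks + 1, ?_⟩
      have hcks : ∀ l, ∑ i, (Q ^ ks) i l ≤ 1 :=
        fun l => colsum_pow_le_one Q hQnn hQcol ks l
      have hcksnn : ∀ l, 0 ≤ ∑ i, (Q ^ ks) i l :=
        fun l => Finset.sum_nonneg fun i _ => pow_entry_nonneg Q hQnn ks i l
      -- Q vstar j is at least p1 p2 / 5
      have hQvj : p1 * p2 * (5:ℝ)⁻¹ ≤ Q vstar j := by
        have hterm : Tzz m1 m2 p1 p2 q Act.a11 vstar j * d j Act.a11 = p1 * p2 * (5:ℝ)⁻¹ := by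
          have h1 : Tzz m1 m2 p1 p2 q Act.a11 vstar j = p1 * p2 := by
            show Tr m1 p1 vstar.1 j.1 * Tr m2 p2 vstar.2 j.2 = p1 * p2
            rw [hvstar]
            show (if ((1:ℕ) = 0) then 1 - p1 else if (1:ℕ) = 1 then p1 else 0)
              * (if ((1:ℕ) = 0) then 1 - p2 else if (1:ℕ) = 1 then p2 else 0) = p1 * p2
            norm_num
          have h2 : d j Act.a11 = (5:ℝ)⁻¹ := by
            rw [hddef]; dsimp only; rw [if_neg hj]
          rw [h1, h2]
        calc p1 * p2 * (5:ℝ)⁻¹ = Tzz m1 m2 p1 p2 q Act.a11 vstar j * d j Act.a11 := hterm.symm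
          _ ≤ ∑ a : Act, Tzz m1 m2 p1 p2 q a vstar j * d j a :=
            Finset.single_le_sum (fun a _ => mul_nonneg (Tzz_nonneg hp1 hp2 hq a vstar j)
              (hd.1 j a)) (Finset.mem_univ Act.a11)
          _ = Q vstar j := rfl
      have hQvj0 : 0 < Q vstar j :=
        lt_of_lt_of_le (by positivity) hQvj
      rw [pow_succ, colsum_pow_mul]
      have hbound : ∑ l, (∑ i, (Q ^ ks) i l) * Q l j
          ≤ ∑ l, (if l = vstar then (∑ i, (Q ^ ks) i vstar) else 1) * Q l j := by
        refine Finset.sum_le_sum fun l _ => ?_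
        by_cases hl : l = vstar
        · rw [if_pos hl, hl]
        · rw [if_neg hl]
          exact mul_le_mul_of_nonneg_right (hcks l) (hQnn l j)
      have hsplit : ∑ l, (if l = vstar then (∑ i, (Q ^ ks) i vstar) else 1) * Q l j
          = (∑ l, Q l j) + ((∑ i, (Q ^ ks) i vstar) - 1) * Q vstar j := by
        have e : ∀ l, (if l = vstar then (∑ i, (Q ^ ks) i vstar) else 1) * Q l j
            = Q l j + (if l = vstar then ((∑ i, (Q ^ ks) i vstar) - 1) * Q l j else 0) := by
          intro l; split_ifs <;> ring
        rw [Finset.sum_congr rfl fun l _ => e l, Finset.sum_add_distrib]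
        congr 1
        rw [Finset.sum_ite_eq' Finset.univ vstar (fun l => ((∑ i, (Q ^ ks) i vstar) - 1) * Q l j),
          if_pos (Finset.mem_univ vstar)]
      have hfinal : (∑ l, Q l j) + ((∑ i, (Q ^ ks) i vstar) - 1) * Q vstar j < 1 := by
        have h1 : (∑ l, Q l j) ≤ 1 := hQcol j
        have h2 : ((∑ i, (Q ^ ks) i vstar) - 1) * Q vstar j < 0 :=
          mul_neg_of_neg_of_pos (by linarith) hQvj0
        linarith
      calc ∑ l, (∑ i, (Q ^ ks) i l) * Q l j
          ≤ ∑ l, (if l = vstar then (∑ i, (Q ^ ks) i vstar) else 1) * Q l j := hbound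
        _ = (∑ l, Q l j) + ((∑ i, (Q ^ ks) i vstar) - 1) * Q vstar j := hsplit
        _ < 1 := hfinal
  have ht : Tendsto (fun k : ℕ => Q ^ k) atTop (nhds 0) :=
    pow_tendsto_zero_of_colsum Q hQnn hQcol habs
  -- identify the value
  have hQy : ∀ v', Q.mulVec ylim v' = ylim v' - g v' := by
    intro v'
    have h1 : ∀ n : ℕ, (∑ v, Q v' v * y n v) = y (n+1) v' - g v' := by
      intro n
      have e1 : ∀ v, Q v' v * y n v = ∑ k ∈ Finset.range n, Q v' v * (Q ^ k).mulVec g v := by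
        intro v; rw [hydef]; dsimp only; rw [Finset.mul_sum]
      rw [Finset.sum_congr rfl fun v _ => e1 v, Finset.sum_comm]
      have e2 : ∀ k, (∑ v, Q v' v * (Q ^ k).mulVec g v) = (Q ^ (k+1)).mulVec g v' := by
        intro k
        rw [pow_succ', ← Matrix.mulVec_mulVec]
        rfl
      rw [Finset.sum_congr rfl fun k _ => e2 k]
      rw [hydef]; dsimp only
      rw [Finset.sum_range_succ' (fun k => (Q ^ k).mulVec g v') n]
      rw [pow_zero, Matrix.one_mulVec]
      ring
    have t1 : Tendsto (fun n : ℕ => ∑ v, Q v' v * y n v) atTop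
        (nhds (∑ v, Q v' v * ylim v)) :=
      tendsto_finset_sum _ fun v _ => (hytend v).const_mul (Q v' v)
    have t2 : Tendsto (fun n : ℕ => y (n+1) v' - g v') atTop (nhds (ylim v' - g v')) := by
      have := ((hytend v').comp (tendsto_add_atTop_nat 1)).sub_const (g v')
      simpa using this
    have t1' : Tendsto (fun n : ℕ => y (n+1) v' - g v') atTop
        (nhds (∑ v, Q v' v * ylim v)) := by
      simpa only [h1] using t1
    exact tendsto_nhds_unique t1' t2
  have hQyl : (1 - Q).mulVec ylim = g := by
    funext v'
    rw [Matrix.sub_mulVec]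
    show (1 : Matrix (TwoV m1 m2) (TwoV m1 m2) ℝ).mulVec ylim v' - Q.mulVec ylim v' = g v'
    rw [Matrix.one_mulVec, hQy v']
    ring
  have hinv : ((1 - Q)⁻¹).mulVec g = ylim := inv_mulVec_spec ht hQyl
  refine ⟨d, hd, ht, ?_⟩
  rw [← hQdef, hinv]
  exact Finset.sum_le_sum fun v _ => hylim_le v



end Aux9
lemma sInf_eq_of_between (A B : Set ℝ) (hAB : A ⊆ B) (h0 : ∀ c ∈ B, 0 ≤ c)
    (hBA : ∀ c ∈ B, ∃ L ∈ A, L ≤ c) : sInf A = sInf B := by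
  rcases B.eq_empty_or_nonempty with hB | hB
  · have hA : A = ∅ := Set.subset_empty_iff.1 (hB ▸ hAB)
    rw [hB, hA]
  · obtain ⟨c, hc⟩ := hB
    obtain ⟨L, hL, _⟩ := hBA c hc
    have hAne : A.Nonempty := ⟨L, hL⟩
    have hBbdd : BddBelow B := ⟨0, fun c hc => h0 c hc⟩
    have hAbdd : BddBelow A := ⟨0, fun L hL => h0 L (hAB hL)⟩
    apply le_antisymm
    · refine le_csInf ⟨c, hc⟩ fun b hb => ?_
      obtain ⟨L', hL', hLb⟩ := hBA b hb
      exact (csInf_le hAbdd hL').trans hLb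
    · exact csInf_le_csInf hBbdd hAne hAB
/-- **Linear program for the optimal expected waiting time for two elementary links.**
The infimum, over decision functions under which absorption is certain, of the expected
time to absorption `⟨γ|(I - Q^d)⁻¹|g_{p₁}⟩⊗|g_{p₂}⟩` equals the optimal value of the
stated linear program, and every feasible point defines a stationary policy via
`d(0,m₁,m₂)(a) = ⟨0,m₁,m₂|w_a⟩/⟨0,m₁,m₂|x⟩`. -/
theorem lp_two_links_waiting_time (m1 m2 : ℕ) (p1 p2 q : ℝ)
    (hp1 : 0 ≤ p1 ∧ p1 ≤ 1) (hp2 : 0 ≤ p2 ∧ p2 ≤ 1) (hq : 0 ≤ q ∧ q ≤ 1) :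
    (sInf {L : ℝ | ∃ d : TwoV m1 m2 → Act → ℝ, ValidDec d ∧
        Tendsto (fun k : ℕ => Qmat m1 m2 p1 p2 q d ^ k) atTop (nhds 0) ∧
        L = ∑ v' : TwoV m1 m2,
          ((1 - Qmat m1 m2 p1 p2 q d)⁻¹).mulVec (ginit m1 m2 p1 p2) v'}
      = sInf {c : ℝ | ∃ (x : TwoV m1 m2 → ℝ) (w : Act → TwoV m1 m2 → ℝ),
          Feas11 m1 m2 p1 p2 q x w ∧ c = ∑ v : TwoV m1 m2, x v}) ∧
    (∀ (x : TwoV m1 m2 → ℝ) (w : Act → TwoV m1 m2 → ℝ),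
      Feas11 m1 m2 p1 p2 q x w →
      ∀ vv, 0 < x vv → (∀ a, 0 ≤ w a vv / x vv) ∧ ∑ a : Act, w a vv / x vv = 1) := by
  constructor
  · refine sInf_eq_of_between _ _ ?_ ?_ ?_
    · rintro L ⟨d, hd, ht, hL⟩
      exact ⟨_, _, dir1 hp1 hp2 hq d hd ht, hL⟩
    · rintro c ⟨x, w, hf, hc⟩
      rw [hc]
      exact Finset.sum_nonneg fun v _ => feas_x_nonneg hf v
    · rintro c ⟨x, w, hf, hc⟩
      obtain ⟨d, hd, ht, hle⟩ := dir2 hp1 hp2 hq x w hf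
      exact ⟨_, ⟨d, hd, ht, rfl⟩, by rw [hc]; exact hle⟩
  · intro x w hf vv hx
    refine ⟨fun a => div_nonneg (hf.1 a vv).1 (le_of_lt hx), ?_⟩
    rw [← Finset.sum_div, hf.2.2 vv, div_self (ne_of_gt hx)]
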